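/- arXiv:2211.04090 — 5 statements merged into one kernel-verified Lean document; each statement's English description precedes it below -/
import Mathlib

section
/- Suppose a ≠ 0, h ≠ 0, and set r = |⟨a, h⟩|/(‖a‖·‖h‖) and t = Ω/(P₀·‖h‖²). Assume 0 < t ≤ 1 and r < 1. Let u₂ = √((1−t)/(1−r²)), z₂ = √(P₀(1−t)/(1−r²)), and z₁ = √P₀·(√t − u₂·r)·φ, where φ = ⟨h, a⟩/|⟨h, a⟩| if ⟨h, a⟩ ≠ 0 and φ = 1 otherwise. Then the beamformer ŵ = z₁·h/‖h‖ + z₂·a/‖a‖ satisfies ‖ŵ‖² = P₀, |⟨h, ŵ⟩|² = Ω (both constraints hold with equality), and achieves the objective value |⟨a, ŵ⟩|² = P₀·‖a‖²·(r·√t + √((1−r²)(1−t)))². (Achievability part of the third case of Lemma 1.) -/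
local notation "⟪" x ", " y "⟫" => @inner ℂ _ _ x y

/-- Achievability part of the third case of Lemma 1: the beamformer
`ŵ = z₁·h/‖h‖ + z₂·a/‖a‖` meets both constraints with equality and achieves the
objective value `P₀·‖a‖²·(r·√t + √((1−r²)(1−t)))²`. -/
theorem stmt_2 (N_T : ℕ) (P₀ Ω : ℝ) (hP₀ : 0 < P₀) (hΩ : 0 < Ω)
    (h a : EuclideanSpace ℂ (Fin N_T)) (ha : a ≠ 0) (hh : h ≠ 0)
    (r t : ℝ)
    (hr : r = ‖⟪a, h⟫‖ / (‖a‖ * ‖h‖))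
    (ht : t = Ω / (P₀ * ‖h‖ ^ 2))
    (ht_pos : 0 < t) (ht_le : t ≤ 1) (hr_lt : r < 1)
    (u₂ z₂ : ℝ) (φ z₁ : ℂ)
    (hu₂ : u₂ = Real.sqrt ((1 - t) / (1 - r ^ 2)))
    (hz₂ : z₂ = Real.sqrt (P₀ * (1 - t) / (1 - r ^ 2)))
    (hφ : φ = if ⟪h, a⟫ ≠ 0 then ⟪h, a⟫ / (‖⟪h, a⟫‖ : ℂ) else 1)
    (hz₁ : z₁ = (Real.sqrt P₀ * (Real.sqrt t - u₂ * r) : ℝ) * φ)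
    (w_opt : EuclideanSpace ℂ (Fin N_T))
    (hw_opt : w_opt = z₁ • ((‖h‖ : ℂ)⁻¹ • h) + (z₂ : ℂ) • ((‖a‖ : ℂ)⁻¹ • a)) :
    ‖w_opt‖ ^ 2 = P₀ ∧
      ‖⟪h, w_opt⟫‖ ^ 2 = Ω ∧
      ‖⟪a, w_opt⟫‖ ^ 2 =
        P₀ * ‖a‖ ^ 2 *
          (r * Real.sqrt t + Real.sqrt ((1 - r ^ 2) * (1 - t))) ^ 2 := by
  have hnpos : (0:ℝ) < ‖h‖ := norm_pos_iff.mpr hh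
  have hapos : (0:ℝ) < ‖a‖ := norm_pos_iff.mpr ha
  have hnne : (‖h‖:ℂ) ≠ 0 := by exact_mod_cast hnpos.ne'
  have hane : (‖a‖:ℂ) ≠ 0 := by exact_mod_cast hapos.ne'
  have hr0 : 0 ≤ r := hr ▸ div_nonneg (norm_nonneg _) (by positivity)
  have hden : 0 < 1 - r^2 := by nlinarith
  have ht1 : 0 ≤ 1 - t := by linarith
  set S := Real.sqrt P₀ with hS
  set T := Real.sqrt t with hT
  have hS2 : S^2 = P₀ := Real.sq_sqrt hP₀.le
  have hT2 : T^2 = t := Real.sq_sqrt ht_pos.le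
  have hS0 : 0 ≤ S := Real.sqrt_nonneg _
  have hT0 : 0 ≤ T := Real.sqrt_nonneg _
  have hU0 : 0 ≤ u₂ := hu₂ ▸ Real.sqrt_nonneg _
  have hU2 : u₂^2 * (1 - r^2) = 1 - t := by
    rw [hu₂, Real.sq_sqrt (div_nonneg ht1 hden.le)]
    field_simp
  have hz2 : z₂ = S * u₂ := by
    rw [hz₂, hu₂, hS, mul_div_assoc, Real.sqrt_mul hP₀.le]
  have habsφ : ‖φ‖ = 1 := by
    rw [hφ]; split_ifs with h0
    · rw [norm_div, Complex.norm_real, norm_norm,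
        div_self (by simpa using h0)]
    · simp
  have hφne : φ ≠ 0 := by
    intro h0; rw [h0] at habsφ; simp at habsφ
  have hψ : (starRingEnd ℂ) φ = φ⁻¹ := by
    apply eq_inv_of_mul_eq_one_right
    rw [Complex.mul_conj, Complex.normSq_eq_norm_sq, habsφ]; norm_num
  have habsc : ‖⟪h,a⟫‖ = r * (‖a‖ * ‖h‖) := by
    have hsym : ‖⟪a,h⟫‖ = ‖⟪h,a⟫‖ := by
      rw [← inner_conj_symm h a, Complex.norm_conj]
    rw [hr] at *
    rw [← hsym]
    field_simp
  have hceq : ⟪h,a⟫ = ((r * (‖a‖ * ‖h‖) : ℝ) : ℂ) * φ := by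
    rw [hφ]; split_ifs with h0
    · have h' : ((‖⟪h,a⟫‖ : ℝ) : ℂ) ≠ 0 := by
        exact_mod_cast norm_ne_zero_iff.mpr h0
      rw [← habsc, mul_comm, div_mul_cancel₀ _ h']
    · push_neg at h0
      rw [h0, norm_zero] at habsc
      rw [h0, ← habsc]
      simp
  have hca : ⟪a,h⟫ = ((r * (‖a‖ * ‖h‖) : ℝ) : ℂ) * φ⁻¹ := by
    rw [← inner_conj_symm a h, hceq, map_mul, Complex.conj_ofReal, hψ]
  -- inner products with w_opt
  have hinh : ⟪h, w_opt⟫ = ((S * T * ‖h‖ : ℝ) : ℂ) * φ := by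
    rw [hw_opt]
    simp only [inner_add_right, inner_smul_right, hceq, hz₁, hz2,
      inner_self_eq_norm_sq_to_K]
    push_cast
    field_simp
    rw [RCLike.ofReal_eq_complex_ofReal]
    ring
  have hina : ⟪a, w_opt⟫ = ((S * ‖a‖ * (r*T + u₂*(1-r^2)) : ℝ) : ℂ) := by
    rw [hw_opt]
    simp only [inner_add_right, inner_smul_right, hca, hz₁, hz2,
      inner_self_eq_norm_sq_to_K]
    push_cast
    field_simp
    rw [RCLike.ofReal_eq_complex_ofReal]
    ring
  have hV : u₂ * (1 - r^2) = Real.sqrt ((1 - r^2) * (1 - t)) := by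
    have e : Real.sqrt ((1 - r^2) * (1 - t)) =
        Real.sqrt ((1 - t) / (1 - r^2)) * Real.sqrt ((1 - r^2)^2) := by
      rw [← Real.sqrt_mul (div_nonneg ht1 hden.le)]
      congr 1
      field_simp
    rw [hu₂, e, Real.sqrt_sq hden.le]
  refine ⟨?_, ?_, ?_⟩
  · -- norm
    have hx : ‖z₁ • ((‖h‖:ℂ)⁻¹ • h)‖^2 = S^2 * (T - u₂*r)^2 := by
      rw [norm_smul, norm_smul, hz₁, norm_mul, Complex.norm_real,
        habsφ, norm_inv, Complex.norm_real, norm_norm, mul_one,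
        inv_mul_cancel₀ hnpos.ne', mul_one, Real.norm_eq_abs, sq_abs, mul_pow]
    have hy : ‖(z₂:ℂ) • ((‖a‖:ℂ)⁻¹ • a)‖^2 = S^2 * u₂^2 := by
      rw [norm_smul, norm_smul, Complex.norm_real, norm_inv, Complex.norm_real, norm_norm,
        inv_mul_cancel₀ hapos.ne', mul_one, hz2, Real.norm_eq_abs, sq_abs, mul_pow]
    have hxy : ⟪z₁ • ((‖h‖:ℂ)⁻¹ • h), (z₂:ℂ) • ((‖a‖:ℂ)⁻¹ • a)⟫ =
        ((S^2 * (T - u₂*r) * u₂ * r : ℝ) : ℂ) := by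
      simp only [inner_smul_left, inner_smul_right, hceq, hz₁, hz2, map_mul,
        Complex.conj_ofReal, hψ, map_inv₀]
      push_cast
      field_simp
    rw [hw_opt, norm_add_sq (𝕜 := ℂ), hx, hy, hxy]
    simp only [RCLike.re_to_complex, Complex.ofReal_re]
    linear_combination ((T - u₂*r)^2 + 2*(T - u₂*r)*u₂*r + u₂^2) * hS2 +
      P₀ * hT2 + P₀ * hU2
  · rw [hinh, norm_mul, Complex.norm_real, Real.norm_eq_abs, habsφ, mul_one,
      abs_of_nonneg (by positivity)]
    have hΩeq : Ω = t * (P₀ * ‖h‖^2) := by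
      rw [ht]; field_simp
    rw [hΩeq]
    linear_combination (T^2 * ‖h‖^2) * hS2 + (P₀ * ‖h‖^2) * hT2
  · rw [hina, Complex.norm_real, Real.norm_eq_abs, sq_abs, ← hV]
    linear_combination (‖a‖^2 * (r*T + u₂*(1-r^2))^2) * hS2
end

section
/- Suppose a ≠ 0, h ≠ 0, 0 < Ω ≤ P₀·‖h‖², and P₀·|⟨h, a⟩|² ≤ Ω·‖a‖² (i.e., the matched beamformer √P₀·a/‖a‖ violates the SNR constraint or meets it with equality). Set r = |⟨a, h⟩|/(‖a‖·‖h‖) and t = Ω/(P₀·‖h‖²), so that r² ≤ t ≤ 1. Then every feasible w satisfies |⟨a, w⟩|² ≤ P₀·‖a‖²·(r·√t + √((1−r²)(1−t)))². (Optimality part of the third case of Lemma 1.) -/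
local notation "⟪" x ", " y "⟫" => @inner ℂ _ _ x y

private lemma sq_le_imp' (a b : ℝ) (ha : 0 ≤ a) (hb : 0 ≤ b) (h : a ^ 2 ≤ b ^ 2) :
    a ≤ b := by nlinarith

private lemma key_scalar (P₀ r t x : ℝ) (hP : 0 < P₀) (hr0 : 0 ≤ r) (hrt : r ^ 2 ≤ t)
    (ht1 : t ≤ 1) (hx0 : 0 ≤ x) (hxl : P₀ * t ≤ x ^ 2) (hxu : x ^ 2 ≤ P₀) :
    r * x + Real.sqrt (1 - r ^ 2) * Real.sqrt (P₀ - x ^ 2) ≤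
      Real.sqrt P₀ * (r * Real.sqrt t + Real.sqrt ((1 - r ^ 2) * (1 - t))) := by
  have ht0 : 0 ≤ t := le_trans (sq_nonneg r) hrt
  set c := Real.sqrt (1 - r ^ 2) with hc
  set v := Real.sqrt (P₀ - x ^ 2) with hv
  set p := Real.sqrt (P₀ * t) with hp
  set S := Real.sqrt (P₀ - P₀ * t) with hS
  have hc0 : 0 ≤ c := Real.sqrt_nonneg _
  have hv0 : 0 ≤ v := Real.sqrt_nonneg _
  have hp0 : 0 ≤ p := Real.sqrt_nonneg _
  have hS0 : 0 ≤ S := Real.sqrt_nonneg _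
  have hr1 : r ^ 2 ≤ 1 := le_trans hrt ht1
  have hPt : P₀ * t ≤ P₀ := by nlinarith
  have hc2 : c ^ 2 = 1 - r ^ 2 := Real.sq_sqrt (by linarith)
  have hv2 : v ^ 2 = P₀ - x ^ 2 := Real.sq_sqrt (by linarith)
  have hp2 : p ^ 2 = P₀ * t := Real.sq_sqrt (by positivity)
  have hS2 : S ^ 2 = P₀ - P₀ * t := Real.sq_sqrt (by linarith)
  have hRHS : Real.sqrt P₀ * (r * Real.sqrt t + Real.sqrt ((1 - r ^ 2) * (1 - t)))
      = r * p + c * S := by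
    rw [hp, hS, hc]
    rw [Real.sqrt_mul hP.le t, show P₀ - P₀ * t = P₀ * (1 - t) by ring,
      Real.sqrt_mul hP.le (1 - t), Real.sqrt_mul (by linarith : (0:ℝ) ≤ 1 - r ^ 2)]
    ring
  rw [hRHS]
  have A : (0:ℝ) ≤ r ^ 2 * (x ^ 2 - P₀ * t) := mul_nonneg (sq_nonneg r) (by linarith)
  have A' : (0:ℝ) ≤ (1 - r ^ 2) * (x ^ 2 - P₀ * t) :=
    mul_nonneg (by linarith) (by linarith)
  have B : (0:ℝ) ≤ P₀ * (t - r ^ 2) := mul_nonneg hP.le (by linarith)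
  have hpx : p ≤ x := sq_le_imp' p x hp0 hx0 (by rw [hp2]; exact hxl)
  have hvS : v ≤ S := sq_le_imp' v S hv0 hS0 (by rw [hv2, hS2]; linarith)
  have h1 : r * S ≤ c * x := by
    refine sq_le_imp' _ _ (mul_nonneg hr0 hS0) (mul_nonneg hc0 hx0) ?_
    have e : (c * x) ^ 2 - (r * S) ^ 2
        = (1 - r ^ 2) * (x ^ 2 - P₀ * t) + P₀ * (t - r ^ 2) := by
      rw [mul_pow, mul_pow, hc2, hS2]; ring
    linarith
  have h2 : r * v ≤ c * p := by
    refine sq_le_imp' _ _ (mul_nonneg hr0 hv0) (mul_nonneg hc0 hp0) ?_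
    have e : (c * p) ^ 2 - (r * v) ^ 2
        = r ^ 2 * (x ^ 2 - P₀ * t) + P₀ * (t - r ^ 2) := by
      rw [mul_pow, mul_pow, hc2, hp2, hv2]; ring
    linarith
  have e1 : (S - v) * (S + v) = (x - p) * (x + p) := by
    linear_combination hS2 - hv2 + hp2
  rcases eq_or_lt_of_le (add_nonneg hS0 hv0) with hsv | hsv
  · have hSz : S = 0 := by linarith
    have hvz : v = 0 := by linarith
    have hv2z : v ^ 2 = 0 := by rw [hvz]; ring
    have hS2z : S ^ 2 = 0 := by rw [hSz]; ring
    have hxp : x = p := le_antisymm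
      (sq_le_imp' x p hx0 hp0 (by rw [hp2]; linarith)) hpx
    rw [hSz, hvz, hxp]
  · have h3 : r * (S + v) ≤ c * (x + p) := by
      have := add_le_add h1 h2; linarith [this]
    have hstep : r * (x - p) * (S + v) ≤ c * (S - v) * (S + v) := by
      calc r * (x - p) * (S + v) = (x - p) * (r * (S + v)) := by ring
        _ ≤ (x - p) * (c * (x + p)) := mul_le_mul_of_nonneg_left h3 (by linarith)
        _ = c * ((x - p) * (x + p)) := by ring
        _ = c * ((S - v) * (S + v)) := by rw [e1]
        _ = c * (S - v) * (S + v) := by ring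
    have h4 := le_of_mul_le_mul_right hstep hsv
    linarith

set_option maxHeartbeats 1000000 in
/-- Optimality part of the third case of Lemma 1: when the matched beamformer
violates (or exactly meets) the SNR constraint, every feasible `w` satisfies
`|⟨a,w⟩|² ≤ P₀·‖a‖²·(r·√t + √((1−r²)(1−t)))²`. -/
theorem stmt_3 (N_T : ℕ) (P₀ Ω : ℝ) (hP₀ : 0 < P₀) (hΩ : 0 < Ω)
    (h a : EuclideanSpace ℂ (Fin N_T)) (ha : a ≠ 0) (hh : h ≠ 0)
    (hfeas : Ω ≤ P₀ * ‖h‖ ^ 2)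
    (hcase : P₀ * ‖⟪h, a⟫‖ ^ 2 ≤ Ω * ‖a‖ ^ 2)
    (r t : ℝ)
    (hr : r = ‖⟪a, h⟫‖ / (‖a‖ * ‖h‖))
    (ht : t = Ω / (P₀ * ‖h‖ ^ 2)) :
    ∀ w : EuclideanSpace ℂ (Fin N_T),
      ‖w‖ ^ 2 ≤ P₀ → Ω ≤ ‖⟪h, w⟫‖ ^ 2 →
        ‖⟪a, w⟫‖ ^ 2 ≤
          P₀ * ‖a‖ ^ 2 *
            (r * Real.sqrt t + Real.sqrt ((1 - r ^ 2) * (1 - t))) ^ 2 := by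
  intro w hw hsnr
  have hh0 : (0:ℝ) < ‖h‖ := norm_pos_iff.mpr hh
  have ha0 : (0:ℝ) < ‖a‖ := norm_pos_iff.mpr ha
  have hhC : ((‖h‖:ℂ)) ^ 2 ≠ 0 := by
    simpa using pow_ne_zero 2 (by exact_mod_cast hh0.ne' : (‖h‖:ℂ) ≠ 0)
  -- basic facts about r and t
  have habs : ‖⟪a, h⟫‖ = ‖⟪h, a⟫‖ := by
    rw [← inner_conj_symm h a, Complex.norm_conj]
  have hr0 : 0 ≤ r := by
    rw [hr]; positivity
  have ht0 : 0 < t := by rw [ht]; positivity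
  have ht1 : t ≤ 1 := by
    rw [ht]; exact (div_le_one (by positivity)).mpr hfeas
  have hrt : r ^ 2 ≤ t := by
    rw [hr, ht, div_pow, div_le_div_iff₀ (by positivity) (by positivity)]
    rw [habs]
    nlinarith [sq_nonneg ‖h‖, hcase]
  -- decomposition of w along h
  set cw : ℂ := ⟪h, w⟫ / ((‖h‖:ℂ) ^ 2) with hcw
  set wp : EuclideanSpace ℂ (Fin N_T) := w - cw • h with hwp
  have hdec : w = cw • h + wp := by rw [hwp]; abel
  have horth : ⟪h, wp⟫ = 0 := by
    rw [hwp, inner_sub_right, inner_smul_right, hcw, inner_self_eq_norm_sq_to_K]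
    field_simp
    simp [hh]
  have hpyth : ‖w‖ ^ 2 = ‖cw • h‖ ^ 2 + ‖wp‖ ^ 2 := by
    rw [hdec, @norm_add_sq ℂ, inner_smul_left, horth]
    simp
  set X : ℝ := ‖⟪h, w⟫‖ / ‖h‖ with hX
  have hX0 : 0 ≤ X := by rw [hX]; positivity
  have hnormcw : ‖cw • h‖ = X := by
    rw [norm_smul, hcw, norm_div, norm_pow,
      Complex.norm_of_nonneg hh0.le, hX]
    field_simp
  have habs_cw : ‖cw‖ = ‖⟪h, w⟫‖ / ‖h‖ ^ 2 := by
    rw [hcw, norm_div, norm_pow, Complex.norm_of_nonneg hh0.le]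
  -- decomposition of a along h
  set ca : ℂ := ⟪h, a⟫ / ((‖h‖:ℂ) ^ 2) with hca
  set ap : EuclideanSpace ℂ (Fin N_T) := a - ca • h with hap
  have hadec : a = ca • h + ap := by rw [hap]; abel
  have hpytha : ‖a‖ ^ 2 = ‖ca • h‖ ^ 2 + ‖ap‖ ^ 2 := by
    rw [hadec, @norm_add_sq ℂ, inner_smul_left]
    have horth' : ⟪h, ap⟫ = 0 := by
      rw [hap, inner_sub_right, inner_smul_right, hca, inner_self_eq_norm_sq_to_K]
      field_simp
      simp [hh]
    rw [horth']
    simp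
  have habs_ah : ‖⟪a, h⟫‖ = r * (‖a‖ * ‖h‖) := by
    rw [hr]; field_simp
  have hnormca : ‖ca • h‖ = r * ‖a‖ := by
    rw [norm_smul, hca, norm_div, norm_pow,
      Complex.norm_of_nonneg hh0.le, ← habs, habs_ah]
    field_simp
  have hap_sq : ‖ap‖ ^ 2 = ‖a‖ ^ 2 * (1 - r ^ 2) := by
    have h5 := hpytha
    rw [hnormca] at h5
    linear_combination -h5
  have hap_norm : ‖ap‖ = ‖a‖ * Real.sqrt (1 - r ^ 2) := by
    rw [← Real.sqrt_sq (norm_nonneg ap), hap_sq,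
      Real.sqrt_mul (sq_nonneg ‖a‖), Real.sqrt_sq ha0.le]
  -- constraints on X
  have hXu : X ^ 2 ≤ P₀ := by
    have h5 := hpyth
    rw [hnormcw] at h5
    linarith [sq_nonneg ‖wp‖]
  have hXl : P₀ * t ≤ X ^ 2 := by
    have hPt : P₀ * t = Ω / ‖h‖ ^ 2 := by
      rw [ht]; field_simp
    rw [hPt, hX, div_pow]
    exact div_le_div_of_nonneg_right hsnr (by positivity) |>.trans_eq rfl
  have hwp_le : ‖wp‖ ≤ Real.sqrt (P₀ - X ^ 2) := by
    rw [← Real.sqrt_sq (norm_nonneg wp)]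
    apply Real.sqrt_le_sqrt
    have h5 := hpyth
    rw [hnormcw] at h5
    linarith
  -- inner product split
  have hsplit : ⟪a, w⟫ = cw * ⟪a, h⟫ + ⟪ap, wp⟫ := by
    conv_lhs => rw [hdec]
    rw [inner_add_right, inner_smul_right]
    congr 1
    conv_lhs => rw [hadec]
    rw [inner_add_left, inner_smul_left, horth]
    simp
  -- main bound
  have hbound : ‖⟪a, w⟫‖ ≤
      ‖a‖ * (Real.sqrt P₀ * (r * Real.sqrt t + Real.sqrt ((1 - r ^ 2) * (1 - t)))) := by
    calc ‖⟪a, w⟫‖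
        ≤ ‖cw * ⟪a, h⟫‖ + ‖⟪ap, wp⟫‖ := by
          rw [hsplit]; exact norm_add_le _ _
      _ ≤ ‖cw‖ * ‖⟪a, h⟫‖ + ‖ap‖ * ‖wp‖ := by
          rw [norm_mul]
          gcongr
          exact norm_inner_le_norm ap wp
      _ = r * ‖a‖ * X + (‖a‖ * Real.sqrt (1 - r ^ 2)) * ‖wp‖ := by
          rw [habs_cw, habs_ah, hap_norm, hX]
          field_simp
      _ ≤ r * ‖a‖ * X + (‖a‖ * Real.sqrt (1 - r ^ 2)) * Real.sqrt (P₀ - X ^ 2) := by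
          have hnn : (0:ℝ) ≤ ‖a‖ * Real.sqrt (1 - r ^ 2) := by positivity
          exact add_le_add_right (mul_le_mul_of_nonneg_left hwp_le hnn) _
      _ = ‖a‖ * (r * X + Real.sqrt (1 - r ^ 2) * Real.sqrt (P₀ - X ^ 2)) := by ring
      _ ≤ ‖a‖ * (Real.sqrt P₀ * (r * Real.sqrt t + Real.sqrt ((1 - r ^ 2) * (1 - t)))) := by
          exact mul_le_mul_of_nonneg_left
            (key_scalar P₀ r t X hP₀ hr0 hrt ht1 hX0 hXl hXu) ha0.le
  have hfin := pow_le_pow_left₀ (norm_nonneg _) hbound 2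
  calc ‖⟪a, w⟫‖ ^ 2
      ≤ (‖a‖ * (Real.sqrt P₀ *
          (r * Real.sqrt t + Real.sqrt ((1 - r ^ 2) * (1 - t))))) ^ 2 := hfin
    _ = P₀ * ‖a‖ ^ 2 *
          (r * Real.sqrt t + Real.sqrt ((1 - r ^ 2) * (1 - t))) ^ 2 := by
        rw [mul_pow, mul_pow, Real.sq_sqrt hP₀.le]
        ring
end

section
/- Let n ≥ 2, let v₁, v₂ ∈ ℂ^n be unit vectors with r = |⟨v₂, v₁⟩| < 1, and let 0 < t ≤ 1. Then the maximum of |⟨v₂, c⟩|² over all unit vectors c ∈ ℂ^n satisfying |⟨v₁, c⟩|² = t equals (r·√t + √((1−r²)(1−t)))²: every unit vector c with |⟨v₁, c⟩|² = t satisfies |⟨v₂, c⟩|² ≤ (r·√t + √((1−r²)(1−t)))², and there exists a unit vector c with |⟨v₁, c⟩|² = t attaining equality. (The normalized problem (29) in the proof of Lemma 1, solved when the SNR constraint is active.) -/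
local notation "⟪" x ", " y "⟫" => @inner ℂ _ _ x y

/-- The normalized problem (29) in the proof of Lemma 1: for unit vectors
`v₁, v₂` with `r = |⟨v₂,v₁⟩| < 1` and `0 < t ≤ 1`, the maximum of `|⟨v₂,c⟩|²`
over unit vectors `c` with `|⟨v₁,c⟩|² = t` equals
`(r·√t + √((1−r²)(1−t)))²`. -/
theorem stmt_5 (n : ℕ) (hn : 2 ≤ n) (v₁ v₂ : EuclideanSpace ℂ (Fin n))
    (hv₁ : ‖v₁‖ = 1) (hv₂ : ‖v₂‖ = 1)
    (r t : ℝ) (hr : r = ‖⟪v₂, v₁⟫‖) (hr_lt : r < 1)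
    (ht_pos : 0 < t) (ht_le : t ≤ 1) :
    (∀ c : EuclideanSpace ℂ (Fin n), ‖c‖ = 1 → ‖⟪v₁, c⟫‖ ^ 2 = t →
        ‖⟪v₂, c⟫‖ ^ 2 ≤
          (r * Real.sqrt t + Real.sqrt ((1 - r ^ 2) * (1 - t))) ^ 2) ∧
      (∃ c : EuclideanSpace ℂ (Fin n), ‖c‖ = 1 ∧ ‖⟪v₁, c⟫‖ ^ 2 = t ∧
        ‖⟪v₂, c⟫‖ ^ 2 =
          (r * Real.sqrt t + Real.sqrt ((1 - r ^ 2) * (1 - t))) ^ 2) := by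
  have hv11 : ⟪v₁, v₁⟫ = 1 := by
    rw [inner_self_eq_norm_sq_to_K, hv₁]; norm_num
  have hv22 : ⟪v₂, v₂⟫ = 1 := by
    rw [inner_self_eq_norm_sq_to_K, hv₂]; norm_num
  set α : ℂ := ⟪v₁, v₂⟫ with hαdef
  have hconj : ⟪v₂, v₁⟫ = starRingEnd ℂ α := by
    rw [hαdef, inner_conj_symm]
  have hrα : r = ‖α‖ := by
    rw [hr, hconj, Complex.norm_conj]
  have hr0 : 0 ≤ r := by rw [hrα]; exact norm_nonneg _
  have h1r : 0 < 1 - r ^ 2 := by nlinarith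
  have h1t : 0 ≤ 1 - t := by linarith
  have hαα : α * starRingEnd ℂ α = ((r : ℝ) : ℂ) ^ 2 := by
    rw [Complex.mul_conj, hrα]
    norm_cast
    exact (Complex.sq_norm α).symm
  set u : EuclideanSpace ℂ (Fin n) := v₂ - α • v₁ with hudef
  have hv1u : ⟪v₁, u⟫ = 0 := by
    rw [hudef, inner_sub_right, inner_smul_right, hv11, mul_one, ← hαdef, sub_self]
  have huu : ⟪u, u⟫ = ((1 - r ^ 2 : ℝ) : ℂ) := by
    rw [hudef]
    simp only [inner_sub_left, inner_sub_right, inner_smul_left, inner_smul_right,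
      hv11, hv22, mul_one]
    rw [hconj, ← hαdef]
    push_cast
    linear_combination -hαα
  set N : ℝ := Real.sqrt (1 - r ^ 2) with hNdef
  have hN0 : 0 < N := Real.sqrt_pos.mpr h1r
  have hunorm : ‖u‖ = N := by
    have h2 := inner_self_eq_norm_sq_to_K (𝕜 := ℂ) u
    rw [huu] at h2
    have h3 : 1 - r ^ 2 = ‖u‖ ^ 2 := by
      have h4 := congrArg Complex.re h2
      simpa [← Complex.ofReal_pow] using h4
    rw [hNdef, h3, Real.sqrt_sq (norm_nonneg u)]
  set w : EuclideanSpace ℂ (Fin n) := ((N : ℂ))⁻¹ • u with hwdef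
  have hwnorm : ‖w‖ = 1 := by
    rw [hwdef, norm_smul, hunorm]
    simp [abs_of_pos hN0, inv_mul_cancel₀ hN0.ne']
  have hv1w : ⟪v₁, w⟫ = 0 := by
    rw [hwdef, inner_smul_right, hv1u, mul_zero]
  have hwv1 : ⟪w, v₁⟫ = 0 := by
    rw [← inner_conj_symm w v₁, hv1w, map_zero]
  have hww : ⟪w, w⟫ = 1 := by
    rw [inner_self_eq_norm_sq_to_K, hwnorm]; norm_num
  have hv2dec : v₂ = α • v₁ + (N : ℂ) • w := by
    rw [hwdef, smul_smul, mul_inv_cancel₀ (by exact_mod_cast hN0.ne'), one_smul, hudef]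
    abel
  have hinner : ∀ c : EuclideanSpace ℂ (Fin n),
      ⟪v₂, c⟫ = starRingEnd ℂ α * ⟪v₁, c⟫ + (N : ℂ) * ⟪w, c⟫ := by
    intro c
    conv_lhs => rw [hv2dec]
    rw [inner_add_left, inner_smul_left, inner_smul_left, Complex.conj_ofReal]
  have hON : Orthonormal ℂ ![v₁, w] := by
    rw [orthonormal_iff_ite]
    intro i j
    fin_cases i <;> fin_cases j <;>
      simp only [Matrix.cons_val_zero, Matrix.cons_val_one, Matrix.head_cons,
        Fin.zero_eta, Fin.mk_one, Fin.isValue] <;>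
      norm_num [hv11, hww, hv1w, hwv1, hv₁, hwnorm]
  constructor
  · intro c hc hct
    have hbessel := hON.sum_inner_products_le (𝕜 := ℂ) c (s := Finset.univ)
    rw [Fin.sum_univ_two, hc] at hbessel
    simp only [Matrix.cons_val_zero, Matrix.cons_val_one, Matrix.head_cons] at hbessel
    have ha : ‖⟪v₁, c⟫‖ = Real.sqrt t := by
      rw [← hct, Real.sqrt_sq (norm_nonneg _)]
    have hb2 : ‖⟪w, c⟫‖ ^ 2 ≤ 1 - t := by
      have h1 : ‖⟪v₁, c⟫‖ = ‖⟪v₁, c⟫‖ := rfl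
      have h2 : ‖⟪w, c⟫‖ = ‖⟪w, c⟫‖ := rfl
      rw [h1, h2, hct] at hbessel
      nlinarith
    have hb : ‖⟪w, c⟫‖ ≤ Real.sqrt (1 - t) := by
      rw [← Real.sqrt_sq (norm_nonneg ⟪w, c⟫)]
      exact Real.sqrt_le_sqrt hb2
    have hkey : ‖⟪v₂, c⟫‖ ≤ r * Real.sqrt t + Real.sqrt ((1 - r ^ 2) * (1 - t)) := by
      rw [hinner c]
      calc ‖(starRingEnd ℂ α * ⟪v₁, c⟫ + (N : ℂ) * ⟪w, c⟫)‖
          ≤ ‖(starRingEnd ℂ α * ⟪v₁, c⟫)‖ + ‖((N : ℂ) * ⟪w, c⟫)‖ :=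
            norm_add_le _ _
        _ = r * ‖⟪v₁, c⟫‖ + N * ‖⟪w, c⟫‖ := by
            rw [norm_mul, norm_mul, Complex.norm_conj, Complex.norm_real, Real.norm_eq_abs,
              abs_of_pos hN0, ← hrα]
        _ ≤ r * Real.sqrt t + N * Real.sqrt (1 - t) := by
            rw [ha]
            exact add_le_add le_rfl (mul_le_mul_of_nonneg_left hb hN0.le)
        _ = r * Real.sqrt t + Real.sqrt ((1 - r ^ 2) * (1 - t)) := by
            rw [hNdef, ← Real.sqrt_mul h1r.le]
    have hRHS : 0 ≤ r * Real.sqrt t + Real.sqrt ((1 - r ^ 2) * (1 - t)) := by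
      positivity
    exact pow_le_pow_left₀ (norm_nonneg _) hkey 2
  · -- existence
    set φ : ℂ := if α = 0 then 1 else α / ((r : ℝ) : ℂ) with hφdef
    have hφabs : ‖φ‖ = 1 := by
      rw [hφdef]
      by_cases hα : α = 0
      · simp [hα]
      · have hrne : r ≠ 0 := by
          rw [hrα]; exact (norm_pos_iff.mpr hα).ne'
        rw [if_neg hα, norm_div, Complex.norm_real, Real.norm_eq_abs, abs_of_nonneg hr0, ← hrα,
          div_self hrne]
    have hφkey : starRingEnd ℂ α * φ = ((r : ℝ) : ℂ) := by
      rw [hφdef]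
      by_cases hα : α = 0
      · rw [if_pos hα, hα, map_zero, zero_mul, hrα, hα, norm_zero, Complex.ofReal_zero]
      · have hrne : ((r : ℝ) : ℂ) ≠ 0 := by
          simp only [ne_eq, Complex.ofReal_eq_zero]
          rw [hrα]; exact (norm_pos_iff.mpr hα).ne'
        rw [if_neg hα, mul_div_assoc', mul_comm, Complex.mul_conj, div_eq_iff hrne,
          hrα, Complex.normSq_eq_norm_sq]
        push_cast
        ring
    set c : EuclideanSpace ℂ (Fin n) :=
      ((Real.sqrt t : ℂ) * φ) • v₁ + ((Real.sqrt (1 - t) : ℂ)) • w with hcdef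
    have hic1 : ⟪v₁, c⟫ = (Real.sqrt t : ℂ) * φ := by
      rw [hcdef, inner_add_right, inner_smul_right, inner_smul_right, hv11, hv1w,
        mul_one, mul_zero, add_zero]
    have hicw : ⟪w, c⟫ = ((Real.sqrt (1 - t) : ℝ) : ℂ) := by
      rw [hcdef, inner_add_right, inner_smul_right, inner_smul_right, hwv1, hww,
        mul_one, mul_zero, zero_add]
    have hic2 : ⟪v₂, c⟫ = ((r * Real.sqrt t + Real.sqrt ((1 - r ^ 2) * (1 - t)) : ℝ) : ℂ) := by
      rw [hinner c, hic1, hicw,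
        show starRingEnd ℂ α * ((Real.sqrt t : ℂ) * φ) =
          (starRingEnd ℂ α * φ) * (Real.sqrt t : ℂ) by ring, hφkey, hNdef]
      push_cast [Real.sqrt_mul h1r.le]
      ring
    have hcnorm : ‖c‖ = 1 := by
      have horth : ⟪((Real.sqrt t : ℂ) * φ) • v₁, ((Real.sqrt (1 - t) : ℂ)) • w⟫ = 0 := by
        rw [inner_smul_left, inner_smul_right, hv1w]; ring
      have hsq : ‖c‖ ^ 2 = 1 := by
        rw [hcdef, @norm_add_sq ℂ, horth]
        simp only [map_zero, mul_zero, add_zero]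
        rw [norm_smul, norm_smul, hv₁, hwnorm]
        have h1 : ‖(Real.sqrt t : ℂ) * φ‖ = Real.sqrt t := by
          rw [norm_mul]
          have hφ' : ‖φ‖ = 1 := hφabs
          rw [hφ', mul_one, Complex.norm_real, Real.norm_eq_abs,
            abs_of_nonneg (Real.sqrt_nonneg t)]
        have h2 : ‖((Real.sqrt (1 - t) : ℂ))‖ = Real.sqrt (1 - t) := by
          rw [Complex.norm_real, Real.norm_eq_abs, abs_of_nonneg (Real.sqrt_nonneg _)]
        rw [h1, h2, mul_one, mul_one, Real.sq_sqrt ht_pos.le, Real.sq_sqrt h1t]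
        ring
      rw [← Real.sqrt_sq (norm_nonneg c), hsq, Real.sqrt_one]
    refine ⟨c, hcnorm, ?_, ?_⟩
    · rw [hic1, norm_mul, hφabs, mul_one,
        show ‖((Real.sqrt t : ℂ))‖ = Real.sqrt t by
          rw [Complex.norm_real, Real.norm_eq_abs, abs_of_nonneg (Real.sqrt_nonneg t)]]
      exact Real.sq_sqrt ht_pos.le
    · rw [hic2, Complex.norm_real, Real.norm_eq_abs, abs_of_nonneg (by positivity)]
end

section
/- If w is feasible, ⟨a, w⟩ ≠ 0, and ‖w‖² < P₀, then the scaled beamformer w' = √(P₀/‖w‖²)·w is also feasible (with ‖w'‖² = P₀ and |⟨h, w'⟩|² ≥ Ω), and it achieves a strictly larger objective value: |⟨a, w'⟩|² > |⟨a, w⟩|². Consequently, any maximizer w* of |⟨a, w⟩|² over the feasible set with ⟨a, w*⟩ ≠ 0 must satisfy the power constraint with equality, ‖w*‖² = P₀. (The first step of the proof of Lemma 1 in Appendix A.) -/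
local notation "⟪" x ", " y "⟫" => @inner ℂ _ _ x y

lemma aux_scale (N_T : ℕ) (P₀ Ω : ℝ) (hP₀ : 0 < P₀)
    (h a w : EuclideanSpace ℂ (Fin N_T))
    (hw_snr : Ω ≤ ‖⟪h, w⟫‖ ^ 2)
    (hw_obj : ⟪a, w⟫ ≠ 0) (hw_strict : ‖w‖ ^ 2 < P₀) :
    ‖(Real.sqrt (P₀ / ‖w‖ ^ 2)) • w‖ ^ 2 = P₀ ∧
      Ω ≤ ‖⟪h, (Real.sqrt (P₀ / ‖w‖ ^ 2)) • w⟫‖ ^ 2 ∧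
      ‖⟪a, w⟫‖ ^ 2 < ‖⟪a, (Real.sqrt (P₀ / ‖w‖ ^ 2)) • w⟫‖ ^ 2 := by
  have hw0 : w ≠ 0 := by
    intro hw0; apply hw_obj; rw [hw0]; simp
  have ht : 0 < ‖w‖ ^ 2 := pow_pos (norm_pos_iff.mpr hw0) 2
  set t := ‖w‖ ^ 2 with htdef
  set c := Real.sqrt (P₀ / t) with hc
  have hcnn : 0 ≤ c := Real.sqrt_nonneg _
  have hc2 : c ^ 2 = P₀ / t := Real.sq_sqrt (by positivity)
  have hgt : 1 < P₀ / t := (one_lt_div ht).mpr hw_strict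
  have hnorm : ‖c • w‖ ^ 2 = P₀ := by
    rw [norm_smul, Real.norm_eq_abs, abs_of_nonneg hcnn, mul_pow, hc2]
    field_simp
    exact htdef.symm
  refine ⟨hnorm, ?_, ?_⟩
  · have : ‖⟪h, c • w⟫‖ ^ 2 = (P₀ / t) * ‖⟪h, w⟫‖ ^ 2 := by
      rw [← Complex.coe_smul, inner_smul_right]
      rw [norm_mul, Complex.norm_real, Real.norm_eq_abs, abs_of_nonneg hcnn, mul_pow, hc2]
    rw [this]
    nlinarith [sq_nonneg (‖⟪h, w⟫‖)]
  · have heq : ‖⟪a, c • w⟫‖ ^ 2 = (P₀ / t) * ‖⟪a, w⟫‖ ^ 2 := by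
      rw [← Complex.coe_smul, inner_smul_right]
      rw [norm_mul, Complex.norm_real, Real.norm_eq_abs, abs_of_nonneg hcnn, mul_pow, hc2]
    rw [heq]
    have hpos : 0 < ‖⟪a, w⟫‖ ^ 2 := by
      have := norm_pos_iff.mpr hw_obj; positivity
    nlinarith

/-- First step of the proof of Lemma 1 (Appendix A): scaling a strictly
power-infeasible beamformer up to full power keeps it feasible and strictly
increases the objective; hence any maximizer with nonzero objective uses
full power. -/
theorem stmt_6 (N_T : ℕ) (P₀ Ω : ℝ) (hP₀ : 0 < P₀) (hΩ : 0 < Ω)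
    (h a w : EuclideanSpace ℂ (Fin N_T))
    (hw_pow : ‖w‖ ^ 2 ≤ P₀) (hw_snr : Ω ≤ ‖⟪h, w⟫‖ ^ 2)
    (hw_obj : ⟪a, w⟫ ≠ 0) (hw_strict : ‖w‖ ^ 2 < P₀)
    (w' : EuclideanSpace ℂ (Fin N_T))
    (hw' : w' = (Real.sqrt (P₀ / ‖w‖ ^ 2)) • w) :
    (‖w'‖ ^ 2 = P₀ ∧ Ω ≤ ‖⟪h, w'⟫‖ ^ 2 ∧
        ‖⟪a, w⟫‖ ^ 2 < ‖⟪a, w'⟫‖ ^ 2) ∧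
      (∀ wstar : EuclideanSpace ℂ (Fin N_T),
        ‖wstar‖ ^ 2 ≤ P₀ → Ω ≤ ‖⟪h, wstar⟫‖ ^ 2 →
        ⟪a, wstar⟫ ≠ 0 →
        (∀ v : EuclideanSpace ℂ (Fin N_T),
          ‖v‖ ^ 2 ≤ P₀ → Ω ≤ ‖⟪h, v⟫‖ ^ 2 →
            ‖⟪a, v⟫‖ ^ 2 ≤ ‖⟪a, wstar⟫‖ ^ 2) →
        ‖wstar‖ ^ 2 = P₀) := by
  constructor
  · rw [hw']
    exact aux_scale N_T P₀ Ω hP₀ h a w hw_snr hw_obj hw_strict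
  · intro wstar hpow hsnr hobj hmax
    by_contra hne
    have hlt : ‖wstar‖ ^ 2 < P₀ := lt_of_le_of_ne hpow hne
    obtain ⟨h1, h2, h3⟩ := aux_scale N_T P₀ Ω hP₀ h a wstar hsnr hobj hlt
    have := hmax _ h1.le h2
    linarith
end

section
/- Let a₁, a₂, w ∈ ℂ^{N_T}, b₁, b₂ ∈ ℂ^{N_R} with N_R ≥ 2, and let L, β², γ², σ² > 0 be reals. Let P = a₁ b₁^H and Q = a₂ b₂^H be the rank-one N_T×N_R matrices with entries P_{ij} = (a₁)_i·conj((b₁)_j) and Q_{ij} = (a₂)_i·conj((b₂)_j). Then det(L·β²·P^H w w^H P + L·γ²·Q^H w w^H Q + σ²·I_{N_R}) = (σ²)^{N_R−2}·[(L·γ²·‖b₂‖²·|⟨a₂, w⟩|² + σ²)·(L·β²·‖b₁‖²·|⟨a₁, w⟩|² + σ²) − L²·β²·γ²·|⟨a₁, w⟩|²·|⟨a₂, w⟩|²·|⟨b₁, b₂⟩|²]. (Equation (22): the determinant in the mutual information objective with interference from the communication user, evaluated for point-target response matrices.) -/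
open Matrix

/-- Equation (22): the determinant in the mutual information objective with
interference from the communication user, evaluated for point-target response
matrices `P = a₁b₁ᴴ` and `Q = a₂b₂ᴴ`. -/
theorem stmt_10 (N_T N_R : ℕ) (hNR : 2 ≤ N_R)
    (a₁ a₂ w : Fin N_T → ℂ) (b₁ b₂ : Fin N_R → ℂ)
    (L βsq γsq σsq : ℝ) (hL : 0 < L) (hβ : 0 < βsq) (hγ : 0 < γsq) (hσ : 0 < σsq)
    (P Q : Matrix (Fin N_T) (Fin N_R) ℂ)
    (hP : ∀ i j, P i j = a₁ i * (starRingEnd ℂ) (b₁ j))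
    (hQ : ∀ i j, Q i j = a₂ i * (starRingEnd ℂ) (b₂ j)) :
    Matrix.det
        (((L * βsq : ℝ) : ℂ) • Matrix.vecMulVec (Pᴴ *ᵥ w) (star (Pᴴ *ᵥ w)) +
          ((L * γsq : ℝ) : ℂ) • Matrix.vecMulVec (Qᴴ *ᵥ w) (star (Qᴴ *ᵥ w)) +
            (σsq : ℂ) • (1 : Matrix (Fin N_R) (Fin N_R) ℂ)) =
      (σsq : ℂ) ^ (N_R - 2) *
        ((((L * γsq : ℝ) : ℂ) * ((∑ j, ‖b₂ j‖ ^ 2 : ℝ) : ℂ) *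
            ((‖star a₂ ⬝ᵥ w‖ ^ 2 : ℝ) : ℂ) + (σsq : ℂ)) *
          (((L * βsq : ℝ) : ℂ) * ((∑ j, ‖b₁ j‖ ^ 2 : ℝ) : ℂ) *
            ((‖star a₁ ⬝ᵥ w‖ ^ 2 : ℝ) : ℂ) + (σsq : ℂ)) -
        ((L ^ 2 * βsq * γsq : ℝ) : ℂ) *
            ((‖star a₁ ⬝ᵥ w‖ ^ 2 : ℝ) : ℂ) *
            ((‖star a₂ ⬝ᵥ w‖ ^ 2 : ℝ) : ℂ) *
            ((‖star b₁ ⬝ᵥ b₂‖ ^ 2 : ℝ) : ℂ)) := by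
  have hσ0 : (σsq : ℂ) ≠ 0 := by exact_mod_cast hσ.ne'
  set c₁ : ℂ := star a₁ ⬝ᵥ w with hc₁
  set c₂ : ℂ := star a₂ ⬝ᵥ w with hc₂
  set α : ℂ := (L : ℂ) * (βsq : ℂ) * (c₁ * (starRingEnd ℂ) c₁) with hα
  set β : ℂ := (L : ℂ) * (γsq : ℂ) * (c₂ * (starRingEnd ℂ) c₂) with hβ'
  have hPw : ∀ j, (Pᴴ *ᵥ w) j = c₁ * b₁ j := by
    intro j
    rw [hc₁]
    simp only [mulVec, dotProduct, conjTranspose_apply, Pi.star_apply, hP]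
    rw [Finset.sum_mul]
    exact Finset.sum_congr rfl fun i _ => by simp only [star_mul', Complex.star_def, Complex.conj_conj]; ring
  have hQw : ∀ j, (Qᴴ *ᵥ w) j = c₂ * b₂ j := by
    intro j
    rw [hc₂]
    simp only [mulVec, dotProduct, conjTranspose_apply, Pi.star_apply, hQ]
    rw [Finset.sum_mul]
    exact Finset.sum_congr rfl fun i _ => by simp only [star_mul', Complex.star_def, Complex.conj_conj]; ring
  set A : Matrix (Fin N_R) (Fin 2) ℂ :=
    Matrix.of (fun j i => if i = 0 then b₁ j else b₂ j) with hA
  set B : Matrix (Fin 2) (Fin N_R) ℂ :=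
    Matrix.of (fun i k => if i = 0 then α / σsq * (starRingEnd ℂ) (b₁ k)
      else β / σsq * (starRingEnd ℂ) (b₂ k)) with hB
  have hM : (((L * βsq : ℝ) : ℂ) • Matrix.vecMulVec (Pᴴ *ᵥ w) (star (Pᴴ *ᵥ w)) +
          ((L * γsq : ℝ) : ℂ) • Matrix.vecMulVec (Qᴴ *ᵥ w) (star (Qᴴ *ᵥ w)) +
            (σsq : ℂ) • (1 : Matrix (Fin N_R) (Fin N_R) ℂ)) =
      (σsq : ℂ) • (1 + A * B) := by
    ext j k
    simp only [Matrix.add_apply, Matrix.smul_apply, Matrix.vecMulVec_apply, Pi.star_apply,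
      hPw, hQw, Matrix.mul_apply, Matrix.one_apply, hA, hB, Matrix.of_apply, smul_eq_mul,
      star_mul', Fin.sum_univ_two, if_true, one_ne_zero, if_false]
    rcases eq_or_ne j k with h | h
    · simp only [h, if_true]
      field_simp
      push_cast
      simp only [hα, hβ', Complex.star_def]
      ring
    · simp only [if_neg h]
      field_simp
      push_cast
      simp only [hα, hβ', Complex.star_def]
      ring
  rw [hM, Matrix.det_smul, Matrix.det_one_add_mul_comm]
  have hBA : (1 + B * A) = Matrix.of
      ![![1 + α / σsq * (star b₁ ⬝ᵥ b₁), α / σsq * (star b₁ ⬝ᵥ b₂)],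
        ![β / σsq * (star b₂ ⬝ᵥ b₁), 1 + β / σsq * (star b₂ ⬝ᵥ b₂)]] := by
    ext i k
    fin_cases i <;> fin_cases k <;>
      simp [Matrix.mul_apply, Matrix.one_apply, hA, hB, dotProduct, Finset.mul_sum] <;>
      exact Finset.sum_congr rfl fun i _ => by ring
  rw [hBA, Matrix.det_fin_two]
  simp only [Matrix.of_apply, Matrix.cons_val', Matrix.cons_val_zero, Matrix.cons_val_one,
    Matrix.head_cons, Matrix.head_fin_const, Matrix.empty_val', Matrix.cons_val_fin_one]
  have hcard : Fintype.card (Fin N_R) = N_R := Fintype.card_fin N_R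
  rw [hcard]
  have hNpow : (σsq : ℂ) ^ N_R = (σsq : ℂ) ^ (N_R - 2) * (σsq : ℂ) ^ 2 := by
    rw [← pow_add]; congr 1; omega
  have habs : ∀ z : ℂ, ((‖z‖ ^ 2 : ℝ) : ℂ) = z * (starRingEnd ℂ) z := by
    intro z; rw [Complex.sq_norm, Complex.mul_conj]
  have hb : ∀ b : Fin N_R → ℂ, ((∑ j, ‖b j‖ ^ 2 : ℝ) : ℂ) = star b ⬝ᵥ b := by
    intro b
    simp only [dotProduct, Pi.star_apply]
    rw [Complex.ofReal_sum]
    exact Finset.sum_congr rfl fun j _ => by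
      rw [Complex.sq_norm, Complex.star_def, mul_comm, Complex.mul_conj]
  have hb12 : star b₂ ⬝ᵥ b₁ = (starRingEnd ℂ) (star b₁ ⬝ᵥ b₂) := by
    simp only [dotProduct, map_sum]
    exact Finset.sum_congr rfl fun j _ => by
      simp only [Pi.star_apply, Complex.star_def, RingHom.map_mul, Complex.conj_conj]; ring
  rw [hb b₁, hb b₂, habs c₁, habs c₂, habs (star b₁ ⬝ᵥ b₂), hNpow, hb12, hα, hβ']
  push_cast
  field_simp
  ring
end
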